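/- arXiv:2503.02353 — 3 statements merged into one kernel-verified Lean document; each statement's English description precedes it below -/
import Mathlib

section
/- (Lemma 1, scalar form.) Let T ≥ 1, let α : ℕ → ℝ satisfy 0 < α n < 1 for all n, let σ > 0 and μ, x₀ ∈ ℝ. Define ᾱ_t := ∏_{i=1}^{t} α i and η_t := 1 + Σ_{m=1}^{t-1} √(∏_{n=m+1}^{t} α n) (so η_1 = 1). Let ε_1, …, ε_T be independent real random variables each with law gaussianReal 0 1, and define recursively X_0 = x₀ and X_t = √(α t) · X_{t−1} + √(1 − α t) · σ · ε_t + μ/η_T for 1 ≤ t ≤ T. Then for every t with 1 ≤ t ≤ T, the law of X_t equals gaussianReal (√(ᾱ_t) · x₀ + (η_t/η_T) · μ) ((1 − ᾱ_t) · σ²). -/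
open MeasureTheory ProbabilityTheory Finset Real
open scoped NNReal ENNReal

/-- `ᾱ t = ∏_{i=1}^{t} α i`. -/
noncomputable def alphaBar (α : ℕ → ℝ) (t : ℕ) : ℝ := ∏ i ∈ Finset.Icc 1 t, α i

/-- `η t = 1 + ∑_{m=1}^{t-1} √(∏_{n=m+1}^{t} α n)` (so `η 1 = 1`). -/
noncomputable def eta (α : ℕ → ℝ) (t : ℕ) : ℝ :=
  1 + ∑ m ∈ Finset.Icc 1 (t - 1), Real.sqrt (∏ n ∈ Finset.Icc (m + 1) t, α n)

lemma gauss_conv_pdf (m₁ m₂ : ℝ) {v₁ v₂ : ℝ≥0} (h₁ : v₁ ≠ 0) (h₂ : v₂ ≠ 0) (y : ℝ) :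
    ∫ z, gaussianPDFReal m₁ v₁ z * gaussianPDFReal m₂ v₂ (y - z)
      = gaussianPDFReal (m₁ + m₂) (v₁ + v₂) y := by
  set p : ℝ := (v₁ : ℝ) with hp
  set q : ℝ := (v₂ : ℝ) with hq
  have hp0 : 0 < p := lt_of_le_of_ne v₁.coe_nonneg (by simpa [eq_comm, hp] using h₁)
  have hq0 : 0 < q := lt_of_le_of_ne v₂.coe_nonneg (by simpa [eq_comm, hq] using h₂)
  have hpq : 0 < p + q := by linarith
  set b : ℝ := (p + q) / (2 * p * q) with hb
  have hb0 : 0 < b := by positivity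
  set c : ℝ := m₁ + p * (y - m₁ - m₂) / (p + q) with hc
  have key : ∀ z : ℝ,
      (-(z - m₁) ^ 2 / (2 * p)) + (-(y - z - m₂) ^ 2 / (2 * q))
        = -b * (z - c) ^ 2 + (-(y - (m₁ + m₂)) ^ 2 / (2 * (p + q))) := by
    intro z
    rw [hb, hc]
    field_simp
    ring
  have hexpand : ∀ z : ℝ,
      gaussianPDFReal m₁ v₁ z * gaussianPDFReal m₂ v₂ (y - z)
        = ((√(2 * π * p))⁻¹ * (√(2 * π * q))⁻¹ * rexp (-(y - (m₁ + m₂)) ^ 2 / (2 * (p + q))))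
            * rexp (-b * (z - c) ^ 2) := by
    intro z
    simp only [gaussianPDFReal, ← hp, ← hq]
    rw [mul_mul_mul_comm, ← Real.exp_add, key z, Real.exp_add]
    ring
  simp only [hexpand]
  rw [integral_const_mul]
  have : ∫ z : ℝ, rexp (-b * (z - c) ^ 2) = √(π / b) := by
    rw [integral_sub_right_eq_self (fun z => rexp (-b * z ^ 2)) c]
    exact integral_gaussian b
  rw [this, gaussianPDFReal]
  have coepq : ((v₁ + v₂ : ℝ≥0) : ℝ) = p + q := rfl
  rw [coepq]
  have hconst : (√(2 * π * p))⁻¹ * (√(2 * π * q))⁻¹ * √(π / b) = (√(2 * π * (p + q)))⁻¹ := by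
    rw [← Real.sqrt_inv, ← Real.sqrt_inv, ← Real.sqrt_inv, ← Real.sqrt_mul (by positivity),
      ← Real.sqrt_mul (by positivity)]
    congr 1
    have hπ : (0:ℝ) < π := pi_pos
    rw [hb]
    field_simp
  rw [← hconst]; ring

lemma gaussianPDFReal_le (m : ℝ) (v : ℝ≥0) (x : ℝ) :
    gaussianPDFReal m v x ≤ (√(2 * π * v))⁻¹ := by
  rw [gaussianPDFReal]
  have h1 : rexp (-(x - m) ^ 2 / (2 * v)) ≤ 1 := by
    apply Real.exp_le_one_iff.mpr
    apply div_nonpos_of_nonpos_of_nonneg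
    · simp [sq_nonneg]
    · positivity
  calc (√(2 * π * v))⁻¹ * rexp (-(x - m) ^ 2 / (2 * v)) ≤ (√(2 * π * v))⁻¹ * 1 := by
        gcongr
    _ = (√(2 * π * v))⁻¹ := mul_one _

lemma gauss_conv_integrable (m₁ m₂ : ℝ) (v₁ v₂ : ℝ≥0) (y : ℝ) :
    Integrable (fun z => gaussianPDFReal m₁ v₁ z * gaussianPDFReal m₂ v₂ (y - z)) := by
  have h := (integrable_gaussianPDFReal m₁ v₁).bdd_mul
    (f := fun z => gaussianPDFReal m₂ v₂ (y - z))
    (((measurable_gaussianPDFReal m₂ v₂).comp (measurable_const.sub measurable_id)).aestronglyMeasurable)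
    (c := (√(2 * π * v₂))⁻¹) (ae_of_all _ fun z => by
      rw [Real.norm_eq_abs, abs_of_nonneg (gaussianPDFReal_nonneg _ _ _)]
      exact gaussianPDFReal_le _ _ _)
  simpa [mul_comm] using h

lemma gauss_conv_lintegral (m₁ m₂ : ℝ) {v₁ v₂ : ℝ≥0} (h₁ : v₁ ≠ 0) (h₂ : v₂ ≠ 0) (y : ℝ) :
    ∫⁻ z, gaussianPDF m₁ v₁ z * gaussianPDF m₂ v₂ (y - z)
      = gaussianPDF (m₁ + m₂) (v₁ + v₂) y := by
  have hmul : ∀ z, ENNReal.ofReal (gaussianPDFReal m₁ v₁ z)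
      * ENNReal.ofReal (gaussianPDFReal m₂ v₂ (y - z))
      = ENNReal.ofReal (gaussianPDFReal m₁ v₁ z * gaussianPDFReal m₂ v₂ (y - z)) := fun z =>
    (ENNReal.ofReal_mul (gaussianPDFReal_nonneg _ _ _)).symm
  simp only [gaussianPDF, hmul]
  rw [← gauss_conv_pdf m₁ m₂ h₁ h₂ y]
  exact (ofReal_integral_eq_lintegral_ofReal (gauss_conv_integrable m₁ m₂ v₁ v₂ y)
    (ae_of_all _ fun z => mul_nonneg (gaussianPDFReal_nonneg _ _ _)
      (gaussianPDFReal_nonneg _ _ _))).symm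

lemma gauss_map_add (m₁ m₂ : ℝ) {v₁ v₂ : ℝ≥0} (h₁ : v₁ ≠ 0) (h₂ : v₂ ≠ 0) :
    Measure.map (fun p : ℝ × ℝ => p.1 + p.2)
        ((gaussianReal m₁ v₁).prod (gaussianReal m₂ v₂))
      = gaussianReal (m₁ + m₂) (v₁ + v₂) := by
  have hsum : v₁ + v₂ ≠ 0 := by simp [h₁]
  ext s hs
  rw [Measure.map_apply measurable_add hs,
    Measure.prod_apply (measurable_add hs)]
  have hsec : ∀ x : ℝ, (gaussianReal m₂ v₂) (Prod.mk x ⁻¹' ((fun p : ℝ × ℝ => p.1 + p.2) ⁻¹' s))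
      = ∫⁻ z in s, ENNReal.ofReal (gaussianPDFReal m₂ v₂ (z - x)) := by
    intro x
    have : Prod.mk x ⁻¹' ((fun p : ℝ × ℝ => p.1 + p.2) ⁻¹' s) = (fun z => x + z) ⁻¹' s := rfl
    rw [this, ← Measure.map_apply (measurable_const_add x) hs, gaussianReal_map_const_add,
      gaussianReal_of_var_ne_zero _ h₂, withDensity_apply _ hs]
    congr 1
    ext z
    rw [gaussianPDF, ← gaussianPDFReal_sub z x]
  simp only [hsec]
  have hmeasF : Measurable (Function.uncurry fun x z : ℝ =>
      ENNReal.ofReal (gaussianPDFReal m₂ v₂ (z - x))) :=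
    ((measurable_gaussianPDFReal m₂ v₂).comp (measurable_snd.sub measurable_fst)).ennreal_ofReal
  have houter : Measurable fun x : ℝ =>
      ∫⁻ z in s, ENNReal.ofReal (gaussianPDFReal m₂ v₂ (z - x)) :=
    hmeasF.lintegral_prod_right'
  rw [gaussianReal_of_var_ne_zero _ h₁,
    lintegral_withDensity_eq_lintegral_mul _ (measurable_gaussianPDF m₁ v₁) houter]
  simp only [Pi.mul_apply]
  have hpull : ∀ x : ℝ, gaussianPDF m₁ v₁ x * ∫⁻ z in s, ENNReal.ofReal (gaussianPDFReal m₂ v₂ (z - x))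
      = ∫⁻ z in s, gaussianPDF m₁ v₁ x * ENNReal.ofReal (gaussianPDFReal m₂ v₂ (z - x)) := fun x =>
    (lintegral_const_mul' _ _ ENNReal.ofReal_ne_top).symm
  simp only [hpull]
  rw [lintegral_lintegral_swap]
  · have hin : ∀ z : ℝ, ∫⁻ x, gaussianPDF m₁ v₁ x * ENNReal.ofReal (gaussianPDFReal m₂ v₂ (z - x))
        = gaussianPDF (m₁ + m₂) (v₁ + v₂) z := fun z => gauss_conv_lintegral m₁ m₂ h₁ h₂ z
    simp only [hin]
    rw [gaussianReal_of_var_ne_zero _ hsum, withDensity_apply _ hs]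
  · exact ((measurable_gaussianPDF m₁ v₁).comp measurable_fst |>.mul
      (hmeasF.comp measurable_id)).aemeasurable

lemma gauss_sum {Ω : Type*} [MeasurableSpace Ω] (P : Measure Ω) [IsProbabilityMeasure P]
    {X Y : Ω → ℝ} (hX : Measurable X) (hY : Measurable Y) (hXY : IndepFun X Y P)
    {m₁ m₂ : ℝ} {v₁ v₂ : ℝ≥0} (hlX : Measure.map X P = gaussianReal m₁ v₁)
    (hlY : Measure.map Y P = gaussianReal m₂ v₂) :
    Measure.map (fun ω => X ω + Y ω) P = gaussianReal (m₁ + m₂) (v₁ + v₂) := by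
  have hconst : ∀ {Z : Ω → ℝ} {m : ℝ}, Measurable Z → Measure.map Z P = gaussianReal m 0 →
      Z =ᵐ[P] fun _ => m := by
    intro Z m hZ hl
    have h1 : P (Z ⁻¹' {m}) = 1 := by
      rw [← Measure.map_apply hZ (measurableSet_singleton m), hl, gaussianReal_zero_var]
      simp
    have h0 : P ((Z ⁻¹' {m})ᶜ) = 0 :=
      (prob_compl_eq_zero_iff (hZ (measurableSet_singleton _))).mpr h1
    exact ae_iff.mpr h0
  by_cases hv₁ : v₁ = 0
  · subst hv₁
    have hae := hconst hX hlX
    have : Measure.map (fun ω => X ω + Y ω) P = Measure.map (fun ω => m₁ + Y ω) P :=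
      Measure.map_congr (hae.mono fun ω h => by simp [h])
    rw [this, show (fun ω => m₁ + Y ω) = (fun z => m₁ + z) ∘ Y from rfl,
      ← Measure.map_map (measurable_const_add m₁) hY, hlY, gaussianReal_map_const_add]
    rw [add_comm m₂ m₁, zero_add]
  by_cases hv₂ : v₂ = 0
  · subst hv₂
    have hae := hconst hY hlY
    have : Measure.map (fun ω => X ω + Y ω) P = Measure.map (fun ω => X ω + m₂) P :=
      Measure.map_congr (hae.mono fun ω h => by simp [h])
    rw [this, show (fun ω => X ω + m₂) = (fun z => z + m₂) ∘ X from rfl,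
      ← Measure.map_map (measurable_add_const m₂) hX, hlX, gaussianReal_map_add_const]
    rw [add_zero]
  · rw [show (fun ω => X ω + Y ω) = (fun p : ℝ × ℝ => p.1 + p.2) ∘ (fun ω => (X ω, Y ω)) from rfl,
      ← Measure.map_map measurable_add (hX.prodMk hY),
      (indepFun_iff_map_prod_eq_prod_map_map hX.aemeasurable hY.aemeasurable).mp hXY,
      hlX, hlY, gauss_map_add m₁ m₂ hv₁ hv₂]

lemma gauss_affine_map (m : ℝ) (v : ℝ≥0) (c e : ℝ) :
    Measure.map (fun z => c * z + e) (gaussianReal m v)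
      = gaussianReal (c * m + e) (NNReal.mk (c ^ 2) (sq_nonneg _) * v) := by
  rw [show (fun z : ℝ => c * z + e) = (fun z : ℝ => z + e) ∘ (fun z : ℝ => c * z) from rfl,
    ← Measure.map_map (measurable_add_const e) (measurable_id'.const_mul c),
    gaussianReal_map_const_mul, gaussianReal_map_add_const]

lemma law_affine {Ω : Type*} [MeasurableSpace Ω] (P : Measure Ω) {Z : Ω → ℝ}
    (hZ : Measurable Z) {m : ℝ} {v : ℝ≥0} (hl : Measure.map Z P = gaussianReal m v) (c e : ℝ) :
    Measure.map (fun ω => c * Z ω + e) P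
      = gaussianReal (c * m + e) (NNReal.mk (c ^ 2) (sq_nonneg _) * v) := by
  rw [show (fun ω => c * Z ω + e) = (fun z : ℝ => c * z + e) ∘ Z from rfl,
    ← Measure.map_map ((measurable_id'.const_mul c).add_const e) hZ, hl, gauss_affine_map]

lemma eta_rec (α : ℕ → ℝ) (hα : ∀ n, 0 < α n) (k : ℕ) :
    eta α (k + 2) = Real.sqrt (α (k + 2)) * eta α (k + 1) + 1 := by
  simp only [eta, show k + 2 - 1 = k + 1 from rfl, show k + 1 - 1 = k from rfl]
  rw [Finset.sum_Icc_succ_top (Nat.le_add_left 1 k), mul_add, mul_one, Finset.mul_sum]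
  have h1 : ∏ n ∈ Finset.Icc (k + 2) (k + 2), α n = α (k + 2) := by
    rw [Finset.Icc_self, Finset.prod_singleton]
  have h2 : ∀ m ∈ Finset.Icc 1 k,
      Real.sqrt (∏ n ∈ Finset.Icc (m + 1) (k + 2), α n)
        = Real.sqrt (α (k + 2)) * Real.sqrt (∏ n ∈ Finset.Icc (m + 1) (k + 1), α n) := by
    intro m hm
    rw [Finset.mem_Icc] at hm
    rw [Finset.prod_Icc_succ_top (by omega), Real.sqrt_mul
      (Finset.prod_nonneg fun i _ => (hα i).le), mul_comm]
  rw [Finset.sum_congr rfl h2, h1]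
  ring


/-- Lemma 1 (scalar form): the closed-form marginal of the modified forward
diffusion process `X t = √(α t) · X (t-1) + √(1 − α t) · σ · ε t + μ / η T`
started at `X 0 = x₀` is `N(√(ᾱ t) · x₀ + (η t / η T) · μ, (1 − ᾱ t) · σ²)`. -/
theorem modified_forward_marginal
    {Ω : Type*} [MeasurableSpace Ω] (P : Measure Ω) [IsProbabilityMeasure P]
    (T : ℕ) (hT : 1 ≤ T)
    (α : ℕ → ℝ) (hα : ∀ n, 0 < α n ∧ α n < 1)
    (σ : ℝ) (hσ : 0 < σ) (μ x₀ : ℝ)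
    (ε : ℕ → Ω → ℝ) (hεmeas : ∀ t, Measurable (ε t))
    (hεindep : iIndepFun ε P)
    (hεlaw : ∀ t, Measure.map (ε t) P = gaussianReal 0 1)
    (X : ℕ → Ω → ℝ)
    (hX0 : X 0 = fun _ => x₀)
    (hXrec : ∀ t, 1 ≤ t → t ≤ T → X t = fun ω =>
      Real.sqrt (α t) * X (t - 1) ω + Real.sqrt (1 - α t) * σ * ε t ω + μ / eta α T) :
    ∀ t, 1 ≤ t → t ≤ T →
      Measure.map (X t) P
        = gaussianReal (Real.sqrt (alphaBar α t) * x₀ + (eta α t / eta α T) * μ)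
            (((1 - alphaBar α t) * σ ^ 2).toNNReal) := by
  have hα0 : ∀ n, 0 < α n := fun n => (hα n).1
  have hα1 : ∀ n, α n < 1 := fun n => (hα n).2
  have habar_pos : ∀ s, 0 < alphaBar α s := fun s => Finset.prod_pos fun i _ => hα0 i
  have habar_le : ∀ s, alphaBar α s ≤ 1 := fun s =>
    Finset.prod_le_one (fun i _ => (hα0 i).le) fun i _ => (hα1 i).le
  have heta_pos : ∀ s, 0 < eta α s := by
    intro s
    have h := Finset.sum_nonneg (s := Finset.Icc 1 (s - 1))
      (f := fun m => Real.sqrt (∏ n ∈ Finset.Icc (m + 1) s, α n)) fun m _ => Real.sqrt_nonneg _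
    unfold eta; linarith
  have hηT : eta α T ≠ 0 := (heta_pos T).ne'
  -- representation of X s as a measurable function of (ε i)_{i ∈ Icc 1 s}
  have hrep : ∀ s, s ≤ T → ∃ F : ((Finset.Icc 1 s : Finset ℕ) → ℝ) → ℝ,
      Measurable F ∧ X s = fun ω => F fun i => ε i ω := by
    intro s
    induction s with
    | zero => exact fun _ => ⟨fun _ => x₀, measurable_const, hX0⟩
    | succ k ih =>
      intro hk
      obtain ⟨F, hF, hXF⟩ := ih (Nat.le_of_succ_le hk)
      refine ⟨fun u => Real.sqrt (α (k + 1)) * F (fun i =>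
          u ⟨i.1, Finset.mem_Icc.mpr (by have := Finset.mem_Icc.mp i.2; omega)⟩)
          + Real.sqrt (1 - α (k + 1)) * σ * u ⟨k + 1, Finset.mem_Icc.mpr (by omega)⟩
          + μ / eta α T, ?_, ?_⟩
      · exact (((hF.comp (measurable_pi_lambda _ fun i => measurable_pi_apply _)).const_mul
          _).add ((measurable_pi_apply _).const_mul _)).add_const _
      · rw [hXrec (k + 1) (Nat.succ_le_succ (Nat.zero_le k)) hk]
        funext ω
        simp only [Nat.add_sub_cancel, hXF]
  have hXmeas : ∀ s, s ≤ T → Measurable (X s) := by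
    intro s hs
    obtain ⟨F, hF, hXF⟩ := hrep s hs
    rw [hXF]
    exact hF.comp (measurable_pi_lambda _ fun i => hεmeas i)
  have hindep : ∀ s, s + 1 ≤ T → IndepFun (X s) (ε (s + 1)) P := by
    intro s hs
    obtain ⟨F, hF, hXF⟩ := hrep s (Nat.le_of_succ_le hs)
    have hdisj : Disjoint (Finset.Icc 1 s) ({s + 1} : Finset ℕ) := by
      simp only [Finset.disjoint_singleton_right, Finset.mem_Icc]
      omega
    have h2 := hεindep.indepFun_finset (Finset.Icc 1 s) {s + 1} hdisj hεmeas
    have h3 := h2.comp (φ := F)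
      (ψ := fun v : (({s + 1} : Finset ℕ) : Type) → ℝ => v ⟨s + 1, Finset.mem_singleton_self _⟩)
      hF (show Measurable (fun v : (({s + 1} : Finset ℕ) : Type) → ℝ => v ⟨s + 1, Finset.mem_singleton_self _⟩) from measurable_pi_apply _)
    rw [hXF]
    exact h3
  intro t ht
  induction t, ht using Nat.le_induction with
  | base =>
    intro h1T
    have hX1 : X 1 = fun ω => (Real.sqrt (1 - α 1) * σ) * ε 1 ω
        + (Real.sqrt (α 1) * x₀ + μ / eta α T) := by
      rw [hXrec 1 le_rfl h1T]
      funext ω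
      simp only [Nat.sub_self, hX0]
      ring
    rw [hX1, law_affine P (hεmeas 1) (hεlaw 1)]
    have habar1 : alphaBar α 1 = α 1 := by
      simp [alphaBar, Finset.Icc_self]
    have heta1 : eta α 1 = 1 := by
      simp [eta]
    congr 1
    · rw [habar1, heta1, mul_zero, zero_add]
      ring
    · apply NNReal.coe_injective
      rw [NNReal.coe_mul, NNReal.coe_one, NNReal.coe_mk,
        Real.coe_toNNReal _ (by nlinarith [hα1 1, hα0 1, Real.sq_sqrt (by linarith [hα1 1] : (0:ℝ) ≤ 1 - α 1)])]
      rw [mul_pow, Real.sq_sqrt (by linarith [hα1 1] : (0:ℝ) ≤ 1 - α 1), habar1, mul_one]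
  | succ t ht IH =>
    intro hsucc
    have hlt := IH (le_trans (Nat.le_succ t) hsucc)
    have hXt1 : X (t + 1) = fun ω => (Real.sqrt (α (t + 1)) * X t ω)
        + ((Real.sqrt (1 - α (t + 1)) * σ) * ε (t + 1) ω + μ / eta α T) := by
      rw [hXrec (t + 1) (Nat.succ_le_succ (Nat.zero_le t)) hsucc]
      funext ω
      simp only [Nat.add_sub_cancel]
      ring
    have hA := law_affine P (hXmeas t (le_trans (Nat.le_succ t) hsucc)) hlt
      (Real.sqrt (α (t + 1))) 0
    simp only [add_zero] at hA
    have hB := law_affine P (hεmeas (t + 1)) (hεlaw (t + 1))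
      (Real.sqrt (1 - α (t + 1)) * σ) (μ / eta α T)
    have hI := (hindep t hsucc).comp
      (φ := fun z : ℝ => Real.sqrt (α (t + 1)) * z)
      (ψ := fun z : ℝ => (Real.sqrt (1 - α (t + 1)) * σ) * z + μ / eta α T)
      (measurable_id'.const_mul _) ((measurable_id'.const_mul _).add_const _)
    rw [hXt1, gauss_sum P ((hXmeas t (le_trans (Nat.le_succ t) hsucc)).const_mul _)
      (((hεmeas (t + 1)).const_mul _).add_const _) hI hA hB]
    -- algebraic identities
    obtain ⟨k, rfl⟩ : ∃ k, t = k + 1 := ⟨t - 1, by omega⟩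
    have habar_rec : alphaBar α (k + 1 + 1) = alphaBar α (k + 1) * α (k + 2) :=
      Finset.prod_Icc_succ_top (by omega) _
    have hsqrt : Real.sqrt (α (k + 2)) * Real.sqrt (alphaBar α (k + 1))
        = Real.sqrt (alphaBar α (k + 2)) := by
      rw [← Real.sqrt_mul (hα0 (k + 2)).le, habar_rec, mul_comm]
    have hetaeq : eta α (k + 2) = Real.sqrt (α (k + 2)) * eta α (k + 1) + 1 :=
      eta_rec α hα0 k
    congr 1
    · rw [mul_zero, zero_add, mul_add, ← mul_assoc, hsqrt, hetaeq]
      field_simp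
      ring
    · apply NNReal.coe_injective
      have h1 : (0:ℝ) ≤ 1 - alphaBar α (k + 1) := by linarith [habar_le (k + 1)]
      have h2 : (0:ℝ) ≤ 1 - alphaBar α (k + 2) := by linarith [habar_le (k + 2)]
      rw [NNReal.coe_add, NNReal.coe_mul, NNReal.coe_mul, NNReal.coe_one, NNReal.coe_mk,
        NNReal.coe_mk, Real.coe_toNNReal _ (by positivity),
        Real.coe_toNNReal _ (by positivity), mul_one]
      rw [Real.sq_sqrt (hα0 (k + 2)).le, mul_pow,
        Real.sq_sqrt (by linarith [hα1 (k + 2)] : (0:ℝ) ≤ 1 - α (k + 2)), habar_rec]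
      ring
end

section
/- In the setting of Lemma 1 (scalar form), the law of the terminal variable X_T equals gaussianReal (√(ᾱ_T) · x₀ + μ) ((1 − ᾱ_T) · σ²); in particular the mean of X_T is √(ᾱ_T)·x₀ + μ and its variance is (1 − ᾱ_T)·σ². -/
open MeasureTheory ProbabilityTheory Finset
open scoped NNReal ENNReal

section Aux
open Real
open scoped NNReal ENNReal

lemma integral_self_mul_exp {b : ℝ} (hb : 0 < b) :
    ∫ x : ℝ, x * Real.exp (-b * x ^ 2) = 0 := by
  have hderiv : ∀ x : ℝ, HasDerivAt (fun x : ℝ => -(2 * b)⁻¹ * Real.exp (-b * x ^ 2))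
      (x * Real.exp (-b * x ^ 2)) x := by
    intro x
    have h1 : HasDerivAt (fun x : ℝ => -b * x ^ 2) (-b * (2 * x)) x := by
      simpa using ((hasDerivAt_pow 2 x).const_mul (-b))
    have h2 := (h1.exp).const_mul (-(2 * b)⁻¹)
    refine h2.congr_deriv ?_
    have := hb.ne'
    field_simp
  have := integral_eq_zero_of_hasDerivAt_of_integrable hderiv
    (integrable_mul_exp_neg_mul_sq hb)
    ((integrable_exp_neg_mul_sq hb).const_mul _)
  simpa using this

lemma integrable_sq_mul_exp {b : ℝ} (hb : 0 < b) :
    Integrable (fun x : ℝ => x ^ 2 * Real.exp (-b * x ^ 2)) := by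
  have := integrable_rpow_mul_exp_neg_mul_sq hb (s := 2) (by norm_num)
  refine this.congr ?_
  filter_upwards with x
  rw [show ((2 : ℝ) : ℝ) = ((2 : ℕ) : ℝ) by norm_num, Real.rpow_natCast]

lemma integral_sq_mul_exp {b : ℝ} (hb : 0 < b) :
    ∫ x : ℝ, x ^ 2 * Real.exp (-b * x ^ 2) = Real.sqrt (π / b) / (2 * b) := by
  have hderiv : ∀ x : ℝ, HasDerivAt (fun x : ℝ => x * Real.exp (-b * x ^ 2))
      (Real.exp (-b * x ^ 2) - 2 * b * (x ^ 2 * Real.exp (-b * x ^ 2))) x := by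
    intro x
    have h1 : HasDerivAt (fun x : ℝ => -b * x ^ 2) (-b * (2 * x)) x := by
      simpa using ((hasDerivAt_pow 2 x).const_mul (-b))
    have h2 := (hasDerivAt_id x).mul h1.exp
    refine h2.congr_deriv ?_
    simp only [id]
    ring
  have hint : Integrable (fun x : ℝ =>
      Real.exp (-b * x ^ 2) - 2 * b * (x ^ 2 * Real.exp (-b * x ^ 2))) :=
    (integrable_exp_neg_mul_sq hb).sub ((integrable_sq_mul_exp hb).const_mul _)
  have h0 := integral_eq_zero_of_hasDerivAt_of_integrable hderiv hint
    (integrable_mul_exp_neg_mul_sq hb)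
  rw [integral_sub (integrable_exp_neg_mul_sq hb) ((integrable_sq_mul_exp hb).const_mul _),
    integral_gaussian, MeasureTheory.integral_const_mul] at h0
  have : (2 : ℝ) * b ≠ 0 := by positivity
  field_simp at h0 ⊢
  linarith


section PDF
variable (m : ℝ) {v : ℝ≥0}

lemma gaussianPDFReal_zero_eq (hv : v ≠ 0) (x : ℝ) :
    gaussianPDFReal 0 v x
      = (Real.sqrt (2 * π * v))⁻¹ * Real.exp (-(2 * (v : ℝ))⁻¹ * x ^ 2) := by
  have hv' : (0 : ℝ) < v := by positivity
  unfold gaussianPDFReal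
  congr 1
  congr 1
  field_simp
  ring

lemma integrable_id_mul_gaussianPDFReal_zero (hv : v ≠ 0) :
    Integrable (fun x : ℝ => x * gaussianPDFReal 0 v x) := by
  have hv' : (0 : ℝ) < v := by positivity
  have hb : (0:ℝ) < (2 * (v:ℝ))⁻¹ := by positivity
  have := (integrable_mul_exp_neg_mul_sq hb).const_mul (Real.sqrt (2 * π * v))⁻¹
  refine this.congr ?_
  filter_upwards with x
  rw [gaussianPDFReal_zero_eq hv]
  ring

lemma integrable_sq_mul_gaussianPDFReal_zero (hv : v ≠ 0) :
    Integrable (fun x : ℝ => x ^ 2 * gaussianPDFReal 0 v x) := by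
  have hv' : (0 : ℝ) < v := by positivity
  have hb : (0:ℝ) < (2 * (v:ℝ))⁻¹ := by positivity
  have := (integrable_sq_mul_exp hb).const_mul (Real.sqrt (2 * π * v))⁻¹
  refine this.congr ?_
  filter_upwards with x
  rw [gaussianPDFReal_zero_eq hv]
  ring

lemma integral_id_mul_gaussianPDFReal' (hv : v ≠ 0) :
    ∫ x : ℝ, x * gaussianPDFReal m v x = m := by
  have hv' : (0 : ℝ) < v := by positivity
  have hb : (0:ℝ) < (2 * (v:ℝ))⁻¹ := by positivity
  rw [← MeasureTheory.integral_add_right_eq_self (fun x => x * gaussianPDFReal m v x) m]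
  have hrw : ∀ x : ℝ, (x + m) * gaussianPDFReal m v (x + m)
      = x * gaussianPDFReal 0 v x + m * gaussianPDFReal 0 v x := by
    intro x
    rw [gaussianPDFReal_add, show m - m = 0 by ring]
    ring
  simp only [hrw]
  rw [integral_add (integrable_id_mul_gaussianPDFReal_zero hv)
    ((integrable_gaussianPDFReal 0 v).const_mul m)]
  have h1 : ∫ x : ℝ, x * gaussianPDFReal 0 v x = 0 := by
    have : ∀ x : ℝ, x * gaussianPDFReal 0 v x
        = (Real.sqrt (2 * π * v))⁻¹ * (x * Real.exp (-(2 * (v:ℝ))⁻¹ * x ^ 2)) := by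
      intro x; rw [gaussianPDFReal_zero_eq hv]; ring
    simp only [this]
    rw [MeasureTheory.integral_const_mul, integral_self_mul_exp hb, mul_zero]
  rw [h1, MeasureTheory.integral_const_mul, integral_gaussianPDFReal_eq_one 0 hv]
  ring

lemma integral_sq_sub_mul_gaussianPDFReal' (hv : v ≠ 0) :
    ∫ x : ℝ, (x - m) ^ 2 * gaussianPDFReal m v x = v := by
  have hv' : (0 : ℝ) < v := by positivity
  have hb : (0:ℝ) < (2 * (v:ℝ))⁻¹ := by positivity
  rw [← MeasureTheory.integral_add_right_eq_self
    (fun x => (x - m) ^ 2 * gaussianPDFReal m v x) m]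
  have hrw : ∀ x : ℝ, (x + m - m) ^ 2 * gaussianPDFReal m v (x + m)
      = (Real.sqrt (2 * π * v))⁻¹ * (x ^ 2 * Real.exp (-(2 * (v:ℝ))⁻¹ * x ^ 2)) := by
    intro x
    rw [gaussianPDFReal_add, show m - m = 0 by ring, gaussianPDFReal_zero_eq hv]
    ring
  simp only [hrw]
  rw [MeasureTheory.integral_const_mul, integral_sq_mul_exp hb]
  have h2 : π / (2 * (v:ℝ))⁻¹ = 2 * π * v := by field_simp
  rw [h2]
  have h3 : Real.sqrt (2 * π * v) ≠ 0 := by positivity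
  field_simp

lemma integrable_sq_sub_mul_gaussianPDFReal' (hv : v ≠ 0) :
    Integrable (fun x : ℝ => (x - m) ^ 2 * gaussianPDFReal m v x) := by
  have := (integrable_sq_mul_gaussianPDFReal_zero hv).comp_sub_right m
  refine this.congr ?_
  filter_upwards with x
  show (x - m) ^ 2 * gaussianPDFReal 0 v (x - m) = (x - m) ^ 2 * gaussianPDFReal m v x
  rw [gaussianPDFReal_sub, zero_add]

end PDF

lemma gaussianPDFReal_mul_gaussianPDFReal (m₁ m₂ : ℝ) {v₁ v₂ : ℝ≥0}
    (hv₁ : v₁ ≠ 0) (hv₂ : v₂ ≠ 0) (z x : ℝ) :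
    gaussianPDFReal m₁ v₁ x * gaussianPDFReal m₂ v₂ (z - x)
      = gaussianPDFReal (m₁ + m₂) (v₁ + v₂) z
        * gaussianPDFReal (m₁ + v₁ * (z - m₁ - m₂) / (v₁ + v₂)) (v₁ * v₂ / (v₁ + v₂)) x := by
  have h1 : (0:ℝ) < v₁ := by positivity
  have h2 : (0:ℝ) < v₂ := by positivity
  have hs : (0:ℝ) < (v₁:ℝ) + v₂ := by positivity
  have hwR : ((v₁ * v₂ / (v₁ + v₂) : ℝ≥0) : ℝ) = (v₁:ℝ) * v₂ / ((v₁:ℝ) + v₂) := by push_cast; ring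
  have hw : (0:ℝ) < ((v₁ * v₂ / (v₁ + v₂) : ℝ≥0) : ℝ) := by rw [hwR]; positivity
  unfold gaussianPDFReal
  push_cast

  set a : ℝ := (v₁:ℝ)
  set b : ℝ := (v₂:ℝ)
  have hA : (Real.sqrt (2*π*a))⁻¹ * (Real.sqrt (2*π*b))⁻¹
      = (Real.sqrt (2*π*(a+b)))⁻¹ * (Real.sqrt (2*π*(a*b/(a+b))))⁻¹ := by
    rw [← mul_inv, ← mul_inv, ← Real.sqrt_mul (by positivity), ← Real.sqrt_mul (by positivity)]
    congr 1
    congr 1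
    field_simp
  have hE : -(x - m₁)^2 / (2*a) + -(z - x - m₂)^2 / (2*b)
      = -(z - (m₁+m₂))^2 / (2*(a+b)) + -(x - (m₁ + a*(z-m₁-m₂)/(a+b)))^2 / (2*(a*b/(a+b))) := by
    rw [div_add_div _ _ (by positivity : (2:ℝ)*a ≠ 0) (by positivity : (2:ℝ)*b ≠ 0),
      div_add_div _ _ (by positivity : (2:ℝ)*(a+b) ≠ 0) (by positivity : (2:ℝ)*(a*b/(a+b)) ≠ 0)]
    rw [div_eq_div_iff (by positivity) (by positivity)]
    field_simp
    ring
  calc ((Real.sqrt (2*π*a))⁻¹ * Real.exp (-(x - m₁)^2 / (2*a)))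
        * ((Real.sqrt (2*π*b))⁻¹ * Real.exp (-(z - x - m₂)^2 / (2*b)))
      = ((Real.sqrt (2*π*a))⁻¹ * (Real.sqrt (2*π*b))⁻¹)
        * Real.exp (-(x - m₁)^2 / (2*a) + -(z - x - m₂)^2 / (2*b)) := by
        rw [Real.exp_add]; ring
    _ = ((Real.sqrt (2*π*(a+b)))⁻¹ * (Real.sqrt (2*π*(a*b/(a+b))))⁻¹)
        * Real.exp (-(z - (m₁+m₂))^2 / (2*(a+b))
            + -(x - (m₁ + a*(z-m₁-m₂)/(a+b)))^2 / (2*(a*b/(a+b)))) := by rw [hA, hE]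
    _ = _ := by rw [Real.exp_add]; ring


lemma gaussian_conv (m₁ m₂ : ℝ) {v₁ v₂ : ℝ≥0} (hv₁ : v₁ ≠ 0) (hv₂ : v₂ ≠ 0) :
    Measure.map (fun p : ℝ × ℝ => p.1 + p.2)
        ((gaussianReal m₁ v₁).prod (gaussianReal m₂ v₂))
      = gaussianReal (m₁ + m₂) (v₁ + v₂) := by
  have hvs : v₁ + v₂ ≠ 0 := by
    simp only [ne_eq, add_eq_zero, not_and]
    intro h; exact absurd h hv₁
  have hw : v₁ * v₂ / (v₁ + v₂) ≠ 0 := by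
    rw [ne_eq, div_eq_zero_iff]
    push_neg
    exact ⟨by simp [hv₁, hv₂], hvs⟩
  ext s hs
  rw [Measure.map_apply (by fun_prop) hs, Measure.prod_apply (hs.preimage (by fun_prop))]
  have hfib : ∀ x : ℝ, gaussianReal m₂ v₂
        (Prod.mk x ⁻¹' ((fun p : ℝ × ℝ => p.1 + p.2) ⁻¹' s))
      = ∫⁻ z in s, gaussianPDF (m₂ + x) v₂ z := by
    intro x
    have : (Prod.mk x ⁻¹' ((fun p : ℝ × ℝ => p.1 + p.2) ⁻¹' s)) = (fun y => x + y) ⁻¹' s := rfl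
    rw [this, ← Measure.map_apply (measurable_const_add x) hs, gaussianReal_map_const_add,
      gaussianReal_apply _ hv₂]
  simp only [hfib]
  have hmeas2 : Measurable (Function.uncurry fun x z =>
      gaussianPDF m₁ v₁ x * gaussianPDF (m₂ + x) v₂ z) := by
    simp only [gaussianPDF_def, gaussianPDFReal, Function.uncurry_def]
    apply Measurable.fun_mul
    · exact ((measurable_gaussianPDF m₁ v₁).comp measurable_fst)
    · apply Measurable.ennreal_ofReal
      apply Measurable.const_mul
      apply Real.measurable_exp.comp
      fun_prop
  have hmeasz : ∀ x : ℝ, Measurable fun z => gaussianPDF (m₂ + x) v₂ z :=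
    fun x => measurable_gaussianPDF _ _
  rw [gaussianReal_of_var_ne_zero m₁ hv₁,
    lintegral_withDensity_eq_lintegral_mul _ (measurable_gaussianPDF _ _)
      (by
        apply Measurable.lintegral_prod_right'
          (f := Function.uncurry fun x z => gaussianPDF (m₂ + x) v₂ z)
        simp only [gaussianPDF_def, gaussianPDFReal]
        apply Measurable.ennreal_ofReal
        apply Measurable.const_mul
        apply Real.measurable_exp.comp
        fun_prop)]
  simp only [Pi.mul_apply]
  calc ∫⁻ x, gaussianPDF m₁ v₁ x * ∫⁻ z in s, gaussianPDF (m₂ + x) v₂ z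
      = ∫⁻ x, ∫⁻ z in s, gaussianPDF m₁ v₁ x * gaussianPDF (m₂ + x) v₂ z := by
        congr 1; ext x
        rw [lintegral_const_mul _ (hmeasz x)]
    _ = ∫⁻ z in s, ∫⁻ x, gaussianPDF m₁ v₁ x * gaussianPDF (m₂ + x) v₂ z := by
        exact lintegral_lintegral_swap hmeas2.aemeasurable
    _ = ∫⁻ z in s, gaussianPDF (m₁ + m₂) (v₁ + v₂) z := by
        apply setLIntegral_congr_fun hs
        intro z _
        have hx : ∀ x : ℝ, gaussianPDF m₁ v₁ x * gaussianPDF (m₂ + x) v₂ z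
            = ENNReal.ofReal (gaussianPDFReal (m₁ + m₂) (v₁ + v₂) z)
              * ENNReal.ofReal (gaussianPDFReal
                (m₁ + v₁ * (z - m₁ - m₂) / (v₁ + v₂)) (v₁ * v₂ / (v₁ + v₂)) x) := by
          intro x
          rw [gaussianPDF, gaussianPDF, ← ENNReal.ofReal_mul (gaussianPDFReal_nonneg _ _ _),
            ← gaussianPDFReal_sub, gaussianPDFReal_mul_gaussianPDFReal m₁ m₂ hv₁ hv₂ z x,
            ENNReal.ofReal_mul (gaussianPDFReal_nonneg _ _ _)]
        simp only [hx]
        rw [lintegral_const_mul _ (by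
          simp only [← gaussianPDF_def]; exact measurable_gaussianPDF _ _)]
        simp only [← gaussianPDF_def]
        rw [lintegral_gaussianPDF_eq_one _ hw, mul_one]
        rfl
    _ = gaussianReal (m₁ + m₂) (v₁ + v₂) s := (gaussianReal_apply _ hvs s).symm

lemma indepFun_gaussian_sum' {Ω : Type*} [MeasurableSpace Ω] {P : Measure Ω}
    [IsProbabilityMeasure P] {X Y : Ω → ℝ} (hX : Measurable X) (hY : Measurable Y)
    (h : IndepFun X Y P) {m₁ m₂ : ℝ} {v₁ v₂ : ℝ≥0} (hv₁ : v₁ ≠ 0) (hv₂ : v₂ ≠ 0)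
    (h₁ : Measure.map X P = gaussianReal m₁ v₁) (h₂ : Measure.map Y P = gaussianReal m₂ v₂) :
    Measure.map (fun ω => X ω + Y ω) P = gaussianReal (m₁ + m₂) (v₁ + v₂) := by
  have hpair := (indepFun_iff_map_prod_eq_prod_map_map hX.aemeasurable hY.aemeasurable).mp h
  have hcomp : (fun ω => X ω + Y ω) = (fun p : ℝ × ℝ => p.1 + p.2) ∘ (fun ω => (X ω, Y ω)) := rfl
  rw [hcomp, ← Measure.map_map (by fun_prop) (hX.prodMk hY), hpair, h₁, h₂,
    gaussian_conv _ _ hv₁ hv₂]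


lemma integral_gaussianLaw' {Ω : Type*} [MeasurableSpace Ω] {P : Measure Ω}
    [IsProbabilityMeasure P] {X : Ω → ℝ} (hX : Measurable X) {m : ℝ} {v : ℝ≥0} (hv : v ≠ 0)
    (h : Measure.map X P = gaussianReal m v) : ∫ ω, X ω ∂P = m := by
  have h1 : ∫ ω, X ω ∂P = ∫ x, x ∂(Measure.map X P) :=
    (integral_map hX.aemeasurable aestronglyMeasurable_id).symm
  rw [h1, h, gaussianReal_of_var_ne_zero _ hv]
  have h2 : gaussianPDF m v = fun x => ((gaussianPDFReal m v x).toNNReal : ℝ≥0∞) := rfl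
  rw [h2]
  rw [show (∫ (x : ℝ), x ∂(volume.withDensity fun x => ((gaussianPDFReal m v x).toNNReal : ℝ≥0∞)))
      = ∫ (x : ℝ), id x ∂(volume.withDensity fun x => ((gaussianPDFReal m v x).toNNReal : ℝ≥0∞))
      from rfl]
  rw [integral_withDensity_eq_integral_smul
    ((measurable_gaussianPDFReal m v).real_toNNReal) id]
  have h3 : ∀ x : ℝ, (gaussianPDFReal m v x).toNNReal • id x = x * gaussianPDFReal m v x := by
    intro x
    rw [NNReal.smul_def, Real.coe_toNNReal _ (gaussianPDFReal_nonneg m v x), id, smul_eq_mul]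
    ring
  simp only [h3]
  exact integral_id_mul_gaussianPDFReal' m hv

lemma variance_gaussianLaw' {Ω : Type*} [MeasurableSpace Ω] {P : Measure Ω}
    [IsProbabilityMeasure P] {X : Ω → ℝ} (hX : Measurable X) {m : ℝ} {v : ℝ≥0} (hv : v ≠ 0)
    (h : Measure.map X P = gaussianReal m v) : variance X P = v := by
  have hmean := integral_gaussianLaw' hX hv h
  rw [variance, evariance]
  have h2 : ∀ ω, (‖X ω - ∫ ω', X ω' ∂P‖ₑ) ^ 2
      = ENNReal.ofReal ((X ω - m) ^ 2) := by
    intro ω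
    rw [hmean, ← ofReal_norm, ← ENNReal.ofReal_pow (norm_nonneg _),
      Real.norm_eq_abs, sq_abs]
  simp only [h2]
  have h3 : ∫⁻ ω, ENNReal.ofReal ((X ω - m) ^ 2) ∂P
      = ∫⁻ x, ENNReal.ofReal ((x - m) ^ 2) ∂(Measure.map X P) := by
    rw [lintegral_map (by measurability) hX]
  rw [h3, h, gaussianReal_of_var_ne_zero _ hv,
    lintegral_withDensity_eq_lintegral_mul _ (measurable_gaussianPDF m v) (by measurability)]
  have h4 : ∀ x : ℝ, (gaussianPDF m v * fun x => ENNReal.ofReal ((x - m) ^ 2)) x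
      = ENNReal.ofReal ((x - m) ^ 2 * gaussianPDFReal m v x) := by
    intro x
    simp only [Pi.mul_apply, gaussianPDF]
    rw [← ENNReal.ofReal_mul (gaussianPDFReal_nonneg m v x)]
    ring_nf
  simp only [h4]
  rw [← ofReal_integral_eq_lintegral_ofReal (integrable_sq_sub_mul_gaussianPDFReal' m hv)
    (ae_of_all _ fun x => mul_nonneg (sq_nonneg _) (gaussianPDFReal_nonneg m v x)),
    integral_sq_sub_mul_gaussianPDFReal' m hv]
  simp


lemma map_const_mul_gaussian' {Ω : Type*} [MeasurableSpace Ω] {P : Measure Ω}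
    {X : Ω → ℝ} (hX : Measurable X) {m : ℝ} {v : ℝ≥0}
    (h : Measure.map X P = gaussianReal m v) (c : ℝ) :
    Measure.map (fun ω => c * X ω) P = gaussianReal (c * m) (.mk (c ^ 2) (sq_nonneg _) * v) := by
  have he : (fun ω => c * X ω) = (fun x : ℝ => c * x) ∘ X := rfl
  rw [he, ← Measure.map_map (measurable_const_mul c) hX, h, gaussianReal_map_const_mul]

lemma map_add_const_gaussian' {Ω : Type*} [MeasurableSpace Ω] {P : Measure Ω}
    {X : Ω → ℝ} (hX : Measurable X) {m : ℝ} {v : ℝ≥0}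
    (h : Measure.map X P = gaussianReal m v) (c : ℝ) :
    Measure.map (fun ω => X ω + c) P = gaussianReal (m + c) v := by
  have he : (fun ω => X ω + c) = (fun x : ℝ => x + c) ∘ X := rfl
  rw [he, ← Measure.map_map (measurable_add_const c) hX, h, gaussianReal_map_add_const]

end Aux

section Alg
variable {α : ℕ → ℝ}

lemma alphaBar_one : alphaBar α 1 = α 1 := by simp [alphaBar]

lemma alphaBar_succ (t : ℕ) : alphaBar α (t + 1) = alphaBar α t * α (t + 1) :=
  Finset.prod_Icc_succ_top (by omega) _

lemma alphaBar_pos (hα : ∀ n, 0 < α n ∧ α n < 1) (t : ℕ) : 0 < alphaBar α t :=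
  Finset.prod_pos fun i _ => (hα i).1

lemma alphaBar_lt_one (hα : ∀ n, 0 < α n ∧ α n < 1) {t : ℕ} (ht : 1 ≤ t) :
    alphaBar α t < 1 := by
  induction t, ht using Nat.le_induction with
  | base => rw [alphaBar_one]; exact (hα 1).2
  | succ t ht ih =>
      rw [alphaBar_succ]
      have h1 := alphaBar_pos hα t
      have h2 := (hα (t + 1))
      nlinarith

lemma eta_one : eta α 1 = 1 := by simp [eta]

lemma eta_ge_one (t : ℕ) : 1 ≤ eta α t :=
  le_add_of_nonneg_right (Finset.sum_nonneg fun _ _ => Real.sqrt_nonneg _)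

lemma eta_succ (hα : ∀ n, 0 < α n ∧ α n < 1) {t : ℕ} (ht : 1 ≤ t) :
    eta α (t + 1) = Real.sqrt (α (t + 1)) * eta α t + 1 := by
  obtain ⟨s, rfl⟩ : ∃ s, t = s + 1 := ⟨t - 1, by omega⟩
  unfold eta
  simp only [Nat.add_sub_cancel]
  have hsum : ∀ m ∈ Finset.Icc 1 s,
      Real.sqrt (∏ n ∈ Finset.Icc (m + 1) (s + 2), α n)
        = Real.sqrt (α (s + 2)) * Real.sqrt (∏ n ∈ Finset.Icc (m + 1) (s + 1), α n) := by
    intro m hm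
    simp only [Finset.mem_Icc] at hm
    have hp : (∏ n ∈ Finset.Icc (m + 1) (s + 2), α n)
        = (∏ n ∈ Finset.Icc (m + 1) (s + 1), α n) * α (s + 2) :=
      Finset.prod_Icc_succ_top (by omega) _
    rw [hp, Real.sqrt_mul (Finset.prod_nonneg fun i _ => (hα i).1.le), mul_comm]
  rw [Finset.sum_Icc_succ_top (by omega), Finset.sum_congr rfl hsum]
  rw [Finset.Icc_self, Finset.prod_singleton]
  rw [mul_add, Finset.mul_sum, mul_one]
  ring

end Alg

/-- Terminal marginal of the modified forward process: the law of `X T` is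
`N(√(ᾱ T) · x₀ + μ, (1 − ᾱ T) · σ²)`; in particular the mean of `X T` is
`√(ᾱ T) · x₀ + μ` and its variance is `(1 − ᾱ T) · σ²`. -/
theorem modified_forward_terminal
    {Ω : Type*} [MeasurableSpace Ω] (P : Measure Ω) [IsProbabilityMeasure P]
    (T : ℕ) (hT : 1 ≤ T)
    (α : ℕ → ℝ) (hα : ∀ n, 0 < α n ∧ α n < 1)
    (σ : ℝ) (hσ : 0 < σ) (μ x₀ : ℝ)
    (ε : ℕ → Ω → ℝ) (hεmeas : ∀ t, Measurable (ε t))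
    (hεindep : iIndepFun ε P)
    (hεlaw : ∀ t, Measure.map (ε t) P = gaussianReal 0 1)
    (X : ℕ → Ω → ℝ)
    (hX0 : X 0 = fun _ => x₀)
    (hXrec : ∀ t, 1 ≤ t → t ≤ T → X t = fun ω =>
      Real.sqrt (α t) * X (t - 1) ω + Real.sqrt (1 - α t) * σ * ε t ω + μ / eta α T) :
    Measure.map (X T) P
        = gaussianReal (Real.sqrt (alphaBar α T) * x₀ + μ)
            (((1 - alphaBar α T) * σ ^ 2).toNNReal)
      ∧ (∫ ω, X T ω ∂P) = Real.sqrt (alphaBar α T) * x₀ + μ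
      ∧ variance (X T) P = (1 - alphaBar α T) * σ ^ 2 := by
  have hηT0 : eta α T ≠ 0 := by
    have := eta_ge_one (α := α) T; linarith
  -- factorization of `X t` through the noise vector
  have hfact : ∀ t, t ≤ T → ∃ φ : ((Finset.Icc 1 t : Finset ℕ) → ℝ) → ℝ,
      Measurable φ ∧ X t = fun ω => φ (fun i => ε i ω) := by
    intro t
    induction t with
    | zero => exact fun _ => ⟨fun _ => x₀, measurable_const, hX0⟩
    | succ t ih =>
        intro h
        obtain ⟨φ, hφm, hφ⟩ := ih (by omega)
        have hsub : ∀ i : (Finset.Icc 1 t : Finset ℕ), (i : ℕ) ∈ Finset.Icc 1 (t + 1) := by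
          intro i
          have := i.2
          simp only [Finset.mem_Icc] at this ⊢
          omega
        have hmem : t + 1 ∈ Finset.Icc 1 (t + 1) := by simp [Finset.mem_Icc]
        refine ⟨fun v => Real.sqrt (α (t + 1)) * φ (fun i => v ⟨i.1, hsub i⟩)
          + Real.sqrt (1 - α (t + 1)) * σ * v ⟨t + 1, hmem⟩ + μ / eta α T, ?_, ?_⟩
        · apply Measurable.add_const
          apply Measurable.add
          · exact ((hφm.comp (measurable_pi_lambda _
              fun i => measurable_pi_apply _)).const_mul _)
          · exact ((measurable_pi_apply _).const_mul _)
        · rw [hXrec (t + 1) (by omega) h]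
          funext ω
          simp only [Nat.add_sub_cancel, hφ]
  have hXmeas : ∀ t, t ≤ T → Measurable (X t) := by
    intro t ht
    obtain ⟨φ, hm, he⟩ := hfact t ht
    rw [he]
    exact hm.comp (measurable_pi_lambda _ fun i => hεmeas i)
  have hindep : ∀ t, t + 1 ≤ T → IndepFun (X t) (ε (t + 1)) P := by
    intro t ht
    obtain ⟨φ, hφm, hφ⟩ := hfact t (by omega)
    have hdisj : Disjoint (Finset.Icc 1 t) ({t + 1} : Finset ℕ) := by
      simp only [Finset.disjoint_singleton_right, Finset.mem_Icc]
      omega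
    have h := hεindep.indepFun_finset (Finset.Icc 1 t) {t + 1} hdisj hεmeas
    have hmem : t + 1 ∈ ({t + 1} : Finset ℕ) := by simp
    have h2 := h.comp (φ := φ)
      (ψ := fun v : {x // x ∈ ({t + 1} : Finset ℕ)} → ℝ => v ⟨t + 1, hmem⟩)
      hφm (measurable_pi_apply _ : Measurable fun v : {x // x ∈ ({t + 1} : Finset ℕ)} → ℝ => v ⟨t + 1, hmem⟩)
    rw [hφ]
    exact h2
  -- the law of `X t`
  have claim : ∀ t, 1 ≤ t → t ≤ T → Measure.map (X t) P
      = gaussianReal (Real.sqrt (alphaBar α t) * x₀ + μ * eta α t / eta α T)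
          (((1 - alphaBar α t) * σ ^ 2).toNNReal) := by
    intro t ht1
    induction t, ht1 using Nat.le_induction with
    | base =>
        intro htT
        rw [hXrec 1 le_rfl htT]
        simp only [show (1 : ℕ) - 1 = 0 from rfl, hX0]
        have he : (fun ω => Real.sqrt (α 1) * x₀ + Real.sqrt (1 - α 1) * σ * ε 1 ω + μ / eta α T)
            = fun ω => (Real.sqrt (1 - α 1) * σ) * ε 1 ω + (Real.sqrt (α 1) * x₀ + μ / eta α T) := by
          funext ω; ring
        rw [he, map_add_const_gaussian' ((hεmeas 1).const_mul _)
          (map_const_mul_gaussian' (hεmeas 1) (hεlaw 1) _) _]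
        have hm : (Real.sqrt (1 - α 1) * σ) * 0 + (Real.sqrt (α 1) * x₀ + μ / eta α T)
            = Real.sqrt (alphaBar α 1) * x₀ + μ * eta α 1 / eta α T := by
          rw [alphaBar_one, eta_one]; ring
        have hv : (NNReal.mk ((Real.sqrt (1 - α 1) * σ) ^ 2) (sq_nonneg _)) * 1
            = ((1 - alphaBar α 1) * σ ^ 2).toNNReal := by
          have hpos1 : (0:ℝ) < (1 - alphaBar α 1) * σ ^ 2 :=
            mul_pos (by linarith [alphaBar_lt_one hα le_rfl]) (pow_pos hσ 2)
          apply NNReal.coe_injective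
          rw [NNReal.coe_mul, NNReal.coe_one, NNReal.coe_mk,
            Real.coe_toNNReal _ hpos1.le]
          rw [alphaBar_one, mul_pow, Real.sq_sqrt (by linarith [(hα 1).2])]
          ring
        rw [hm, hv]
    | succ t ht ih =>
        intro htT
        have hmap_t := ih (by omega)
        rw [hXrec (t + 1) (by omega) htT]
        simp only [Nat.add_sub_cancel]
        have hXm := hXmeas t (by omega)
        have hᾱpos := alphaBar_pos hα t
        have hᾱlt := alphaBar_lt_one hα ht
        have hα1 := (hα (t + 1)).1
        have hα2 := (hα (t + 1)).2
        have hposσ : (0:ℝ) < σ ^ 2 := pow_pos hσ 2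
        have hpos_t : (0:ℝ) < (1 - alphaBar α t) * σ ^ 2 :=
          mul_pos (by linarith) hposσ
        have hpos_t1 : (0:ℝ) < (1 - alphaBar α (t + 1)) * σ ^ 2 :=
          mul_pos (by linarith [alphaBar_lt_one hα (show 1 ≤ t + 1 by omega)]) hposσ
        have hv₁ : ((NNReal.mk ((Real.sqrt (α (t + 1))) ^ 2) (sq_nonneg _))
            * ((1 - alphaBar α t) * σ ^ 2).toNNReal) ≠ 0 := by
          apply mul_ne_zero
          · intro hc
            have h' := congrArg NNReal.toReal hc
            rw [NNReal.coe_mk, NNReal.coe_zero, Real.sq_sqrt hα1.le] at h'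
            exact absurd h' hα1.ne'
          · exact (Real.toNNReal_pos.mpr hpos_t).ne'
        have hv₂ : ((NNReal.mk ((Real.sqrt (1 - α (t + 1)) * σ) ^ 2) (sq_nonneg _)) * 1) ≠ 0 := by
          rw [mul_one]
          intro hc
          have h' := congrArg NNReal.toReal hc
          rw [NNReal.coe_mk, NNReal.coe_zero, mul_pow,
            Real.sq_sqrt (by linarith : (0:ℝ) ≤ 1 - α (t + 1))] at h'
          exact absurd h' (mul_pos (by linarith : (0:ℝ) < 1 - α (t + 1)) hposσ).ne'
        have hA := map_const_mul_gaussian' hXm hmap_t (Real.sqrt (α (t + 1)))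
        have hB := map_const_mul_gaussian' (hεmeas (t + 1)) (hεlaw (t + 1))
          (Real.sqrt (1 - α (t + 1)) * σ)
        have hABind : IndepFun (fun ω => Real.sqrt (α (t + 1)) * X t ω)
            (fun ω => (Real.sqrt (1 - α (t + 1)) * σ) * ε (t + 1) ω) P :=
          (hindep t htT).comp (measurable_const_mul _) (measurable_const_mul _)
        have hAB := indepFun_gaussian_sum' (hXm.const_mul _) ((hεmeas (t + 1)).const_mul _)
          hABind hv₁ hv₂ hA hB
        have hfinal := map_add_const_gaussian'
          ((hXm.const_mul _).fun_add ((hεmeas (t + 1)).const_mul _)) hAB (μ / eta α T)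
        rw [hfinal]
        have hm : Real.sqrt (α (t + 1)) * (Real.sqrt (alphaBar α t) * x₀ + μ * eta α t / eta α T)
              + Real.sqrt (1 - α (t + 1)) * σ * 0 + μ / eta α T
            = Real.sqrt (alphaBar α (t + 1)) * x₀ + μ * eta α (t + 1) / eta α T := by
          rw [alphaBar_succ, eta_succ hα ht,
            Real.sqrt_mul hᾱpos.le]
          field_simp
          ring
        have hv : ((NNReal.mk ((Real.sqrt (α (t + 1))) ^ 2) (sq_nonneg _))
              * ((1 - alphaBar α t) * σ ^ 2).toNNReal
              + (NNReal.mk ((Real.sqrt (1 - α (t + 1)) * σ) ^ 2) (sq_nonneg _)) * 1)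
            = ((1 - alphaBar α (t + 1)) * σ ^ 2).toNNReal := by
          apply NNReal.coe_injective
          rw [NNReal.coe_add, NNReal.coe_mul, NNReal.coe_mul, NNReal.coe_one,
            NNReal.coe_mk, NNReal.coe_mk,
            Real.coe_toNNReal _ hpos_t.le,
            Real.coe_toNNReal _ hpos_t1.le]
          rw [Real.sq_sqrt hα1.le, mul_pow,
            Real.sq_sqrt (by linarith : (0:ℝ) ≤ 1 - α (t + 1)), alphaBar_succ]
          ring
        rw [hm, hv]
  have hlaw := claim T hT le_rfl
  rw [mul_div_assoc, div_self hηT0, mul_one] at hlaw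
  have hposT : (0:ℝ) < (1 - alphaBar α T) * σ ^ 2 :=
    mul_pos (by linarith [alphaBar_lt_one hα hT]) (pow_pos hσ 2)
  have hvT : (((1 - alphaBar α T) * σ ^ 2).toNNReal : ℝ≥0) ≠ 0 :=
    (Real.toNNReal_pos.mpr hposT).ne'
  refine ⟨hlaw, integral_gaussianLaw' (hXmeas T le_rfl) hvT hlaw, ?_⟩
  rw [variance_gaussianLaw' (hXmeas T le_rfl) hvT hlaw,
    Real.coe_toNNReal _ hposT.le]
end

section
/- (Lemma 2, Bayes density identity.) Let σ > 0, let α_t, ᾱ_{t−1} be real numbers with 0 < α_t < 1 and 0 < ᾱ_{t−1} < 1, set ᾱ_t := α_t · ᾱ_{t−1}, let η_{t−1} > 0, η_T > 0 and set η_t := 1 + √(α_t) · η_{t−1}. Define β̃ := ((1−ᾱ_{t−1})/(1−ᾱ_t)) · (1−α_t) · σ² and, for x_t, x₀ ∈ ℝ, μ̃(x_t, x₀) := (√(α_t)(1−ᾱ_{t−1})/(1−ᾱ_t)) · x_t + (√(ᾱ_{t−1})(1−α_t)/(1−ᾱ_t)) · x₀ + ((η_{t−1}(1−α_t) − √(α_t)(1−ᾱ_{t−1}))/((1−ᾱ_t)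 η_T)) · μ. Then for all x_{t−1}, x_t, x₀ ∈ ℝ: gaussianPDFReal (√(α_t)·x_{t−1} + μ/η_T) ((1−α_t)σ²) x_t · gaussianPDFReal (√(ᾱ_{t−1})·x₀ + (η_{t−1}/η_T)·μ) ((1−ᾱ_{t−1})σ²) x_{t−1} / gaussianPDFReal (√(ᾱ_t)·x₀ + (η_t/η_T)·μ) ((1−ᾱ_t)σ²) x_t = gaussianPDFReal (μ̃(x_t, x₀)) β̃ x_{t−1}. -/
open ProbabilityTheory Real

lemma reverse_conditional_density_key_exp (A B C D p q u m : ℝ) (hC : C ≠ 0)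
    (h1 : A * B / C = D) (h2 : p + q - u = m) :
    A * rexp p * (B * rexp q) / (C * rexp u) = D * rexp m := by
  rw [← h1, ← h2, Real.exp_sub, Real.exp_add]
  field_simp

lemma reverse_conditional_density_key_coef (X Y Z W : ℝ) (hX : 0 ≤ X) (hZ : 0 < Z)
    (h : X * Y = Z * W) : (√X)⁻¹ * (√Y)⁻¹ / (√Z)⁻¹ = (√W)⁻¹ := by
  rw [← mul_inv, ← Real.sqrt_mul hX, h, Real.sqrt_mul hZ.le, mul_inv,
    mul_div_cancel_left₀ _ (by positivity)]

lemma reverse_conditional_density_aux (σ : ℝ) (hσ : 0 < σ)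
    (αt αbar' : ℝ) (hαt0 : 0 < αt) (hαt1 : αt < 1) (hαbar'0 : 0 < αbar') (hαbar'1 : αbar' < 1)
    (ηprev ηT : ℝ) (hηT : 0 < ηT)
    (μ : ℝ) (xprev xt x₀ : ℝ) :
      gaussianPDFReal (Real.sqrt αt * xprev + μ / ηT) (((1 - αt) * σ ^ 2).toNNReal) xt
        * gaussianPDFReal (Real.sqrt αbar' * x₀ + (ηprev / ηT) * μ)
            (((1 - αbar') * σ ^ 2).toNNReal) xprev
        / gaussianPDFReal (Real.sqrt (αt*αbar') * x₀ + ((1 + Real.sqrt αt * ηprev) / ηT) * μ)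
            (((1 - αt*αbar') * σ ^ 2).toNNReal) xt
      = gaussianPDFReal
          ((Real.sqrt αt * (1 - αbar') / (1 - αt*αbar')) * xt
            + (Real.sqrt αbar' * (1 - αt) / (1 - αt*αbar')) * x₀
            + ((ηprev * (1 - αt) - Real.sqrt αt * (1 - αbar')) / ((1 - αt*αbar') * ηT)) * μ)
          (((1 - αbar') / (1 - αt*αbar') * (1 - αt) * σ ^ 2)).toNNReal xprev := by
  have hc0 : 0 < 1 - αt * αbar' := by nlinarith
  have ha0 : 0 < 1 - αt := by linarith
  have hb0 : 0 < 1 - αbar' := by linarith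
  rw [Real.sqrt_mul hαt0.le]
  obtain ⟨s, hs, hs2⟩ : ∃ s, Real.sqrt αt = s ∧ s^2 = αt := ⟨_, rfl, Real.sq_sqrt hαt0.le⟩
  obtain ⟨r, hr, hr2⟩ : ∃ r, Real.sqrt αbar' = r ∧ r^2 = αbar' := ⟨_, rfl, Real.sq_sqrt hαbar'0.le⟩
  rw [hs, hr]
  rw [← hs2] at hαt0 hαt1 hc0 ha0 ⊢
  rw [← hr2] at hαbar'0 hαbar'1 hc0 hb0 ⊢
  clear hs hs2 hr hr2
  simp only [gaussianPDFReal]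
  rw [Real.coe_toNNReal _ (by positivity), Real.coe_toNNReal _ (by positivity),
    Real.coe_toNNReal _ (by positivity), Real.coe_toNNReal _ (by positivity)]
  refine reverse_conditional_density_key_exp _ _ _ _ _ _ _ _ (by positivity)
    (reverse_conditional_density_key_coef _ _ _ _ (by positivity) (by positivity) ?_) ?_
  · field_simp
  · field_simp
    ring

/-- Lemma 2 (Bayes density identity): the reverse conditional density
`q(x_t | x_{t−1}) · q(x_{t−1} | x₀) / q(x_t | x₀)` of the modified forward
process equals the Gaussian density with mean `μ̃(x_t, x₀)` and variance `β̃`. -/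
theorem reverse_conditional_density
    (σ : ℝ) (hσ : 0 < σ)
    (αt αbar' : ℝ) (hαt0 : 0 < αt) (hαt1 : αt < 1) (hαbar'0 : 0 < αbar') (hαbar'1 : αbar' < 1)
    (ηprev ηT : ℝ) (hηprev : 0 < ηprev) (hηT : 0 < ηT)
    (μ : ℝ) :
    let αbar : ℝ := αt * αbar'
    let ηt : ℝ := 1 + Real.sqrt αt * ηprev
    let βtilde : ℝ := ((1 - αbar') / (1 - αbar)) * (1 - αt) * σ ^ 2
    ∀ xprev xt x₀ : ℝ,
      gaussianPDFReal (Real.sqrt αt * xprev + μ / ηT) (((1 - αt) * σ ^ 2).toNNReal) xt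
        * gaussianPDFReal (Real.sqrt αbar' * x₀ + (ηprev / ηT) * μ)
            (((1 - αbar') * σ ^ 2).toNNReal) xprev
        / gaussianPDFReal (Real.sqrt αbar * x₀ + (ηt / ηT) * μ)
            (((1 - αbar) * σ ^ 2).toNNReal) xt
      = gaussianPDFReal
          ((Real.sqrt αt * (1 - αbar') / (1 - αbar)) * xt
            + (Real.sqrt αbar' * (1 - αt) / (1 - αbar)) * x₀
            + ((ηprev * (1 - αt) - Real.sqrt αt * (1 - αbar')) / ((1 - αbar) * ηT)) * μ)
          βtilde.toNNReal xprev := by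
  intro αbar ηt βtilde xprev xt x₀
  exact reverse_conditional_density_aux σ hσ αt αbar' hαt0 hαt1 hαbar'0 hαbar'1 ηprev ηT hηT μ
    xprev xt x₀
end
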